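/- arXiv:2602.18409 — 2 statements merged into one kernel-verified Lean document; each statement's English description precedes it below -/
import Mathlib

section
/- Let 𝒯 be a finite set of templates and fix a finite proposition set AP. A Boolean node classifier on finite pointed labelled graphs over AP is computed by some bounded 𝒯-GNN if and only if it is definable by some GML(𝒯) formula. That is, for every bounded 𝒯-GNN 𝒩 there is a GML(𝒯) formula φ with 𝒩(G,v)=1 ⟺ (G,v) ⊨ φ for all finite pointed graphs (G,v), and conversely for every GML(𝒯) formula φ there is a bounded 𝒯-GNN 𝒩 with the same property. -/
set_option maxHeartbeats 1000000

attribute [local instance 10] Classical.propDecidable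

/-- A template `T = (V, E⁺, E⁻, r)`: vertex set `Fin (n+1)` (cardinality `n+1`),
root `0`, edges `pos`, non-edges `neg`, with `pos ∩ neg = ∅`. -/
structure Template where
  n : ℕ
  pos : Finset (Fin (n + 1) × Fin (n + 1))
  neg : Finset (Fin (n + 1) × Fin (n + 1))
  disj : ∀ p, ¬(p ∈ pos ∧ p ∈ neg)

/-- A labelled directed graph with labels in `Λ`: a finite vertex set (a finite
subset of `ℕ`), an edge relation `E ⊆ V × V`, and a labelling of the nodes. -/
structure LGraph (Λ : Type) where
  verts : Finset ℕ
  edge : ℕ → ℕ → Prop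
  lab : ℕ → Λ
  edge_mem : ∀ u w, edge u w → u ∈ verts ∧ w ∈ verts

/-- `f` is a template embedding of `T` into the pointed graph `(G, w)`:
an injective map sending the root to `w`, `E⁺`-pairs to edges and `E⁻`-pairs to
non-edges. -/
def IsEmb {Λ : Type} (T : Template) (G : LGraph Λ) (w : ℕ) (f : Fin (T.n + 1) → ℕ) : Prop :=
  Function.Injective f ∧ f 0 = w ∧ (∀ i, f i ∈ G.verts) ∧
    (∀ p ∈ T.pos, G.edge (f p.1) (f p.2)) ∧ (∀ p ∈ T.neg, ¬ G.edge (f p.1) (f p.2))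

/-- The (finite) set `emb(T,(G,w))` of template embeddings of `T` into `(G, w)`. -/
noncomputable def embFinset {Λ : Type} (T : Template) (G : LGraph Λ) (w : ℕ) :
    Finset (Fin (T.n + 1) → ℕ) :=
  (Fintype.piFinset fun _ : Fin (T.n + 1) => G.verts).filter (IsEmb T G w)

/-- Forth condition: any `k` pairwise distinct template embeddings of `T` at `(G,v)`
can be matched by `k` pairwise distinct embeddings at `(G',v')`, pointwise related
by `Z`. -/
def Forth {Λ : Type} (Z : ℕ → ℕ → Prop) (T : Template) (G G' : LGraph Λ)
    (v v' : ℕ) (k : ℕ) : Prop :=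
  ∀ F : Fin k → (Fin (T.n + 1) → ℕ), Function.Injective F → (∀ i, IsEmb T G v (F i)) →
    ∃ F' : Fin k → (Fin (T.n + 1) → ℕ), Function.Injective F' ∧ (∀ i, IsEmb T G' v' (F' i)) ∧
      ∀ i u, Z (F i u) (F' i u)

/-- `Z` is a graded `l`-`𝒯`-bisimulation between `G` and `G'`, where the allowed
multiplicities `k` in the back-and-forth conditions are those satisfying `P`. -/
def IsBisimP {Λ : Type} (𝒯 : Finset Template) (P : ℕ → Prop) (G G' : LGraph Λ) :
    ℕ → (ℕ → ℕ → Prop) → Prop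
  | 0, Z => ∀ v v', Z v v' → G.lab v = G'.lab v'
  | l + 1, Z => ∃ Z', IsBisimP 𝒯 P G G' l Z' ∧
      ∀ v v', Z v v' → Z' v v' ∧ ∀ T ∈ 𝒯, ∀ k, P k →
        Forth Z' T G G' v v' k ∧ Forth (fun a b => Z' b a) T G' G v' v k

/-- `(G,v)` and `(G',v')` are graded `l`-`𝒯`-bisimilar. -/
def GBisimilar {Λ : Type} (𝒯 : Finset Template) (l : ℕ) (G : LGraph Λ) (v : ℕ)
    (G' : LGraph Λ) (v' : ℕ) : Prop :=
  ∃ Z, IsBisimP 𝒯 (fun k => 1 ≤ k) G G' l Z ∧ Z v v'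

/-- `(G,v)` and `(G',v')` are `l`-`c`-`𝒯`-bisimilar (multiplicities restricted to `k ≤ c`). -/
def BBisimilar {Λ : Type} (𝒯 : Finset Template) (l c : ℕ) (G : LGraph Λ) (v : ℕ)
    (G' : LGraph Λ) (v' : ℕ) : Prop :=
  ∃ Z, IsBisimP 𝒯 (fun k => 1 ≤ k ∧ k ≤ c) G G' l Z ∧ Z v v'

/-- `A↾c`: cap all multiplicities of a multiset at `c`. -/
noncomputable def mcap {α : Type} (c : ℕ) (m : Multiset α) : Multiset α :=
  m.toFinset.val.bind fun a => Multiset.replicate (min c (m.count a)) a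

/-- The `𝒯`-WL colouring of `G` after `l` rounds, using `hash0` for the initial
colouring and `hash` for the refinement rounds; at each round the new colour of `v`
hashes its previous colour together with, for each template `T ∈ 𝒯`, the multiset of
`T`-labelled colourings induced by the template embeddings at `v`. -/
noncomputable def colWL {Λ C : Type} (𝒯 : Finset Template) (hash0 : Λ → C)
    (hash : C → ((T : {x // x ∈ 𝒯}) → Multiset (Fin (T.1.n + 1) → C)) → C)
    (G : LGraph Λ) : ℕ → ℕ → C
  | 0, v => hash0 (G.lab v)
  | l + 1, v =>
      hash (colWL 𝒯 hash0 hash G l v)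
        (fun T => (embFinset T.1 G v).val.map
          (fun f => fun u => colWL 𝒯 hash0 hash G l (f u)))

/-- A multiset function is `c`-bounded if its value is unchanged when all
multiplicities larger than `c` are replaced by `c`. -/
def CBoundedFun {α β : Type} (c : ℕ) (g : Multiset α → β) : Prop :=
  ∀ m, g m = g (mcap c m)

/-- An `nAr`-ary `L`-layer `𝒯`-GNN with feature dimension `d`: templates from `𝒯`,
template-aggregation functions (invariant under root-fixing label-preserving template
automorphisms), outer multiset aggregation functions, combination functions, and a
Boolean classification function. -/
structure TGNN (𝒯 : Finset Template) (d nAr L : ℕ) where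
  temp : Fin L → Fin nAr → Template
  temp_mem : ∀ l j, temp l j ∈ 𝒯
  aggT : (l : Fin L) → (j : Fin nAr) → ((Fin ((temp l j).n + 1) → (Fin d → ℝ)) → (Fin d → ℝ))
  aggT_inv : ∀ (l : Fin L) (j : Fin nAr) (σ : Equiv.Perm (Fin ((temp l j).n + 1)))
      (lab₁ lab₂ : Fin ((temp l j).n + 1) → (Fin d → ℝ)),
      σ 0 = 0 →
      (∀ p : Fin ((temp l j).n + 1) × Fin ((temp l j).n + 1),
        p ∈ (temp l j).pos ↔ (σ p.1, σ p.2) ∈ (temp l j).pos) →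
      (∀ p : Fin ((temp l j).n + 1) × Fin ((temp l j).n + 1),
        p ∈ (temp l j).neg ↔ (σ p.1, σ p.2) ∈ (temp l j).neg) →
      (∀ u, u ≠ 0 → lab₁ u = lab₂ (σ u)) →
      aggT l j lab₁ = aggT l j lab₂
  agg : Fin L → Fin nAr → Multiset (Fin d → ℝ) → (Fin d → ℝ)
  comb : Fin L → (Fin d → ℝ) → (Fin nAr → (Fin d → ℝ)) → (Fin d → ℝ)
  cls : (Fin d → ℝ) → Bool

/-- The feature vector `λ^l(v)` of node `v` after `l` layers of the `𝒯`-GNN `N` on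
input graph `G`. -/
noncomputable def TGNN.feat {𝒯 : Finset Template} {d nAr L : ℕ} (N : TGNN 𝒯 d nAr L)
    (G : LGraph (Fin d → ℝ)) : ℕ → ℕ → (Fin d → ℝ)
  | 0, v => G.lab v
  | l + 1, v =>
      if h : l < L then
        N.comb ⟨l, h⟩ (N.feat G l v)
          (fun j => N.agg ⟨l, h⟩ j
            ((embFinset (N.temp ⟨l, h⟩ j) G v).val.map
              (fun f => N.aggT ⟨l, h⟩ j (fun u => N.feat G l (f u)))))
      else fun _ => 0

/-- A `𝒯`-GNN is `c`-bounded if all its outer aggregation functions are `c`-bounded. -/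
def TGNN.IsCBounded {𝒯 : Finset Template} {d nAr L : ℕ} (N : TGNN 𝒯 d nAr L) (c : ℕ) : Prop :=
  ∀ l j, CBoundedFun c (N.agg l j)

def boolToReal (b : Bool) : ℝ := if b then 1 else 0

/-- Identify a `{0,1}^d`-labelled graph with a real-vector labelled graph. -/
def LGraph.toReal {d : ℕ} (G : LGraph (Fin d → Bool)) : LGraph (Fin d → ℝ) :=
  ⟨G.verts, G.edge, fun v i => boolToReal (G.lab v i), G.edge_mem⟩

/-- Initialize real feature vectors of dimension `d'` from `{0,1}^a`-labels
(the first `a` coordinates hold the truth values of the propositions, the rest are `0`). -/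
def initG {a : ℕ} (d' : ℕ) (G : LGraph (Fin a → Bool)) : LGraph (Fin d' → ℝ) :=
  ⟨G.verts, G.edge, fun v i => if h : (i : ℕ) < a then boolToReal (G.lab v ⟨i, h⟩) else 0,
    G.edge_mem⟩

/-- Formulae of graded template modal logic `GML(𝒯)` over propositions `AP`
(`⊤` included; a modality `⟨T⟩^{≥j}(φ₁,…,φ_{n_T})` takes `n_T = |V_T| - 1` arguments). -/
inductive GML (AP : Type) : Type
  | top : GML AP
  | prop : AP → GML AP
  | neg : GML AP → GML AP
  | and : GML AP → GML AP → GML AP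
  | dia : (T : Template) → ℕ → (Fin T.n → GML AP) → GML AP

/-- Semantics of `GML(𝒯)` on pointed labelled graphs:
`(G,v) ⊨ ⟨T⟩^{≥j}(φ⃗)` iff at least `j` embeddings `f ∈ emb(T,(G,v))` satisfy
`(G, f(i)) ⊨ φᵢ` for all `1 ≤ i ≤ n_T`. -/
def Sat {AP : Type} (G : LGraph (AP → Bool)) : GML AP → ℕ → Prop
  | .top, _ => True
  | .prop p, v => G.lab v p = true
  | .neg φ, v => ¬ Sat G φ v
  | .and φ ψ, v => Sat G φ v ∧ Sat G ψ v
  | .dia T j φs, v =>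
      j ≤ ((embFinset T G v).filter
        (fun f => ∀ i : Fin T.n, Sat G (φs i) (f i.succ))).card

/-- Modal depth. -/
def GML.md {AP : Type} : GML AP → ℕ
  | .top => 0
  | .prop _ => 0
  | .neg φ => φ.md
  | .and φ ψ => max φ.md ψ.md
  | .dia _ _ φs => 1 + Finset.univ.sup fun i => (φs i).md

/-- Counting bound: the least `c` such that every modality `⟨T⟩^{≥j}` occurring in the
formula has `j ≤ c`. -/
def GML.cb {AP : Type} : GML AP → ℕ
  | .top => 0
  | .prop _ => 0
  | .neg φ => φ.cb
  | .and φ ψ => max φ.cb ψ.cb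
  | .dia _ j φs => max j (Finset.univ.sup fun i => (φs i).cb)

/-- Syntactic depth: counts both Boolean connectives and modalities along the deepest
branch of the syntax tree. -/
def GML.sd {AP : Type} : GML AP → ℕ
  | .top => 0
  | .prop _ => 0
  | .neg φ => 1 + φ.sd
  | .and φ ψ => 1 + max φ.sd ψ.sd
  | .dia _ _ φs => 1 + Finset.univ.sup fun i => (φs i).sd

/-- Well-formedness of a `GML(𝒯)` formula: all templates come from `𝒯` and all
grades satisfy `j ≥ 1`. -/
def GML.Wf {AP : Type} (𝒯 : Finset Template) : GML AP → Prop
  | .top => True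
  | .prop _ => True
  | .neg φ => φ.Wf 𝒯
  | .and φ ψ => φ.Wf 𝒯 ∧ ψ.Wf 𝒯
  | .dia T j φs => T ∈ 𝒯 ∧ 1 ≤ j ∧ ∀ i, (φs i).Wf 𝒯

/-- Finite conjunction (`⊤` for the empty list). -/
def bigConj {AP : Type} : List (GML AP) → GML AP
  | [] => .top
  | φ :: rest => .and φ (bigConj rest)

/-- `|S^{(G,v)}_{T,φ⃗}|`: the number of embeddings `f ∈ emb(T,(G,v))` with
`(G, f(i)) ⊨ φᵢ` for all `1 ≤ i ≤ n_T`. -/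
noncomputable def Scard {AP : Type} (G : LGraph (AP → Bool)) (T : Template) (v : ℕ)
    (φs : Fin T.n → GML AP) : ℕ :=
  ((embFinset T G v).filter (fun f => ∀ i : Fin T.n, Sat G (φs i) (f i.succ))).card

/-- The `l`-characteristic formula `χ^l_{(G,v)}`. -/
noncomputable def charU {AP : Type} [Fintype AP] (𝒯 : Finset Template) :
    ℕ → LGraph (AP → Bool) → ℕ → GML AP
  | 0 => fun G v =>
      bigConj ((Finset.univ : Finset AP).toList.map
        (fun p => if G.lab v p then GML.prop p else GML.neg (GML.prop p)))
  | l + 1 => fun G v =>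
      GML.and (charU 𝒯 l G v)
        (bigConj (𝒯.toList.map (fun T =>
          GML.and
            (bigConj ((embFinset T G v).toList.map (fun f =>
              GML.dia T (Scard G T v (fun i => charU 𝒯 l G (f i.succ)))
                (fun i => charU 𝒯 l G (f i.succ)))))
            (GML.neg (GML.dia T (Scard G T v (fun _ => GML.top) + 1)
              (fun _ => GML.top))))))

/-- `reps m` is a system of representatives for the `m`-`c`-`𝒯`-bisimilarity classes of
finite pointed labelled graphs: every representative is a genuine pointed graph, every
pointed graph is `m`-`c`-`𝒯`-bisimilar to some representative, and distinct
representatives are non-bisimilar. -/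
def RepSystem {AP : Type} (𝒯 : Finset Template) (c : ℕ)
    (reps : ℕ → Finset (LGraph (AP → Bool) × ℕ)) : Prop :=
  ∀ m : ℕ,
    (∀ q ∈ reps m, q.2 ∈ q.1.verts) ∧
    (∀ (G : LGraph (AP → Bool)) (v : ℕ), v ∈ G.verts →
      ∃ q ∈ reps m, BBisimilar 𝒯 m c q.1 q.2 G v) ∧
    (∀ q ∈ reps m, ∀ q' ∈ reps m, BBisimilar 𝒯 m c q.1 q.2 q'.1 q'.2 → q = q')

/-- The bounded `l`-`c`-characteristic formula `χ^{l,c}_{(G,v)}`, relative to a chosen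
system `reps` of representatives of the bounded bisimilarity classes. -/
noncomputable def charB {AP : Type} [Fintype AP] (𝒯 : Finset Template) (c : ℕ)
    (reps : ℕ → Finset (LGraph (AP → Bool) × ℕ)) :
    ℕ → LGraph (AP → Bool) → ℕ → GML AP
  | 0 => fun G v =>
      bigConj ((Finset.univ : Finset AP).toList.map
        (fun p => if G.lab v p then GML.prop p else GML.neg (GML.prop p)))
  | l + 1 => fun G v =>
      GML.and (charB 𝒯 c reps l G v)
        (bigConj (𝒯.toList.map (fun T =>
          GML.and
            (bigConj ((embFinset T G v).toList.map (fun f =>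
              GML.dia T (min c (Scard G T v (fun i => charB 𝒯 c reps l G (f i.succ))))
                (fun i => charB 𝒯 c reps l G (f i.succ)))))
            (bigConj (((Fintype.piFinset (fun _ : Fin T.n => reps l)).filter
                (fun t => Scard G T v
                  (fun i => charB 𝒯 c reps l (t i).1 (t i).2) + 1 ≤ c)).toList.map
              (fun t => GML.neg (GML.dia T
                  (Scard G T v (fun i => charB 𝒯 c reps l (t i).1 (t i).2) + 1)
                  (fun i => charB 𝒯 c reps l (t i).1 (t i).2))))))))

/-- Standard graded forth condition on out-neighbours. -/
def StdForth {Λ : Type} (Z : ℕ → ℕ → Prop) (G G' : LGraph Λ) (v v' : ℕ) (k : ℕ) : Prop :=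
  ∀ us : Fin k → ℕ, Function.Injective us → (∀ i, G.edge v (us i)) →
    ∃ us' : Fin k → ℕ, Function.Injective us' ∧ (∀ i, G'.edge v' (us' i)) ∧
      ∀ i, Z (us i) (us' i)

/-- `Z` is a standard graded `l`-bisimulation (the relation underlying standard 1-WL
colour refinement). -/
def IsStdBisim {Λ : Type} (G G' : LGraph Λ) : ℕ → (ℕ → ℕ → Prop) → Prop
  | 0, Z => ∀ v v', Z v v' → G.lab v = G'.lab v'
  | l + 1, Z => ∃ Z', IsStdBisim G G' l Z' ∧
      ∀ v v', Z v v' → Z' v v' ∧ ∀ k, 1 ≤ k →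
        StdForth Z' G G' v v' k ∧ StdForth (fun a b => Z' b a) G' G v' v k

/-- `(G,v)` and `(G',v')` are standard graded `l`-bisimilar. -/
def StdBisimilar {Λ : Type} (l : ℕ) (G : LGraph Λ) (v : ℕ) (G' : LGraph Λ) (v' : ℕ) : Prop :=
  ∃ Z, IsStdBisim G G' l Z ∧ Z v v'

/-- The edge template `T₁ = ({r,a}, E⁺ = {(r,a)}, E⁻ = ∅, r)`. -/
def T1 : Template := ⟨1, {(0, 1)}, ∅, by decide⟩

/-- The triangle template `T△ = ({r,a,b}, E⁺ = {(r,a),(a,b),(b,r)}, E⁻ = ∅, r)`. -/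
def Ttri : Template := ⟨2, {(0, 1), (1, 2), (2, 0)}, ∅, by decide⟩

/-- The directed 3-cycle, all nodes with the same constant label. -/
def G3 : LGraph Unit where
  verts := {0, 1, 2}
  edge u w := (u = 0 ∧ w = 1) ∨ (u = 1 ∧ w = 2) ∨ (u = 2 ∧ w = 0)
  lab _ := ()
  edge_mem := by rintro u w (⟨rfl, rfl⟩ | ⟨rfl, rfl⟩ | ⟨rfl, rfl⟩) <;> simp

/-- The directed 6-cycle, all nodes with the same constant label. -/
def G6 : LGraph Unit where
  verts := Finset.range 6
  edge u w := u < 6 ∧ w = (u + 1) % 6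
  lab _ := ()
  edge_mem := by
    rintro u w ⟨hu, rfl⟩
    simp only [Finset.mem_range]
    omega

/-! ### Auxiliary lemmas -/

section Aux
attribute [local instance 10] Classical.propDecidable

/-- Satisfaction of a big conjunction. -/
lemma Sat_bigConj {AP : Type} (G : LGraph (AP → Bool)) (L : List (GML AP)) (v : ℕ) :
    Sat G (bigConj L) v ↔ ∀ χ ∈ L, Sat G χ v := by
  induction L with
  | nil => simp [bigConj, Sat]
  | cons χ rest ih => simp [bigConj, Sat, ih]

lemma Wf_bigConj {AP : Type} (𝒯 : Finset Template) (L : List (GML AP))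
    (h : ∀ χ ∈ L, χ.Wf 𝒯) : (bigConj L).Wf 𝒯 := by
  induction L with
  | nil => trivial
  | cons χ rest ih =>
    exact ⟨h χ (by simp), ih fun χ' hχ' => h χ' (by simp [hχ'])⟩

/-- Big disjunction. -/
def bigDisj {AP : Type} (L : List (GML AP)) : GML AP := .neg (bigConj (L.map .neg))

lemma Sat_bigDisj {AP : Type} (G : LGraph (AP → Bool)) (L : List (GML AP)) (v : ℕ) :
    Sat G (bigDisj L) v ↔ ∃ χ ∈ L, Sat G χ v := by
  simp only [bigDisj, Sat, Sat_bigConj]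
  push_neg
  constructor
  · rintro ⟨χ, hχ, h⟩
    simp only [List.mem_map] at hχ
    obtain ⟨ψ, hψ, rfl⟩ := hχ
    exact ⟨ψ, hψ, by simpa [Sat] using h⟩
  · rintro ⟨ψ, hψ, h⟩
    exact ⟨.neg ψ, List.mem_map.2 ⟨ψ, hψ, rfl⟩, by simpa [Sat] using h⟩

lemma Wf_bigDisj {AP : Type} (𝒯 : Finset Template) (L : List (GML AP))
    (h : ∀ χ ∈ L, χ.Wf 𝒯) : (bigDisj L).Wf 𝒯 := by
  refine Wf_bigConj 𝒯 _ ?_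
  intro χ hχ
  simp only [List.mem_map] at hχ
  obtain ⟨ψ, hψ, rfl⟩ := hχ
  exact h ψ hψ

/-! ### `mcap` lemmas -/

instance decEqSubsingleton {α : Type} : Subsingleton (DecidableEq α) :=
  ⟨fun i1 i2 => by funext a b; exact Subsingleton.elim _ _⟩

lemma count_mcap {α : Type} [inst : DecidableEq α] (c : ℕ) (m : Multiset α) (b : α) :
    (mcap c m).count b = min c (m.count b) := by
  obtain rfl : inst = fun a b => Classical.propDecidable (a = b) := Subsingleton.elim _ _
  rw [mcap, Multiset.count_bind]
  have h0 : (m.toFinset.val.map (fun a => (Multiset.replicate (min c (m.count a)) a).count b)).sum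
      = ∑ x ∈ m.toFinset, (Multiset.replicate (min c (m.count x)) x).count b := rfl
  rw [h0]
  rcases em (b ∈ m) with hb | hb
  · rw [Finset.sum_eq_single b]
    · simp [Multiset.count_replicate]
    · intro x hx hxb
      rw [Multiset.count_replicate, if_neg hxb]
    · intro hbx
      exact absurd (Multiset.mem_toFinset.2 hb) hbx
  · rw [Multiset.count_eq_zero_of_notMem hb]
    simp only [min_eq_right (Nat.zero_le c)]
    refine Finset.sum_eq_zero fun x hx => ?_
    have hxb : x ≠ b := fun h => hb (h ▸ Multiset.mem_toFinset.1 hx)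
    rw [Multiset.count_replicate, if_neg hxb]

lemma mcap_idem {α : Type} (c : ℕ) (m : Multiset α) : mcap c (mcap c m) = mcap c m := by
  classical
  ext b
  simp only [count_mcap]
  omega

lemma mcap_map_inj {α β : Type} [DecidableEq α] [DecidableEq β] (c : ℕ) (m : Multiset α)
    (u : α → β) (hu : Function.Injective u) : mcap c (m.map u) = (mcap c m).map u := by
  ext b
  rcases em (∃ x, u x = b) with ⟨x, rfl⟩ | hb
  · rw [count_mcap, Multiset.count_map_eq_count' _ _ hu, Multiset.count_map_eq_count' _ _ hu,
      count_mcap]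
  · have h1 : (m.map u).count b = 0 := by
      rw [Multiset.count_eq_zero]
      intro hmem
      obtain ⟨x, _, rfl⟩ := Multiset.mem_map.1 hmem
      exact hb ⟨x, rfl⟩
    have h2 : ((mcap c m).map u).count b = 0 := by
      rw [Multiset.count_eq_zero]
      intro hmem
      obtain ⟨x, _, rfl⟩ := Multiset.mem_map.1 hmem
      exact hb ⟨x, rfl⟩
    rw [count_mcap, h1, h2, Nat.min_zero]

/-- Multiset sum over `toFinset` of `count • value`. -/
lemma msum_eq {m : Multiset ℕ} : m.sum = ∑ x ∈ m.toFinset, m.count x * x := by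
  conv_lhs => rw [← Multiset.toFinset_sum_count_nsmul_eq m]
  rw [← Multiset.coe_sumAddMonoidHom, map_sum]
  refine Finset.sum_congr rfl fun x _ => ?_
  rw [Multiset.coe_sumAddMonoidHom, Multiset.nsmul_singleton, Multiset.sum_replicate,
    smul_eq_mul]

/-- The key boundedness fact for sums of capped multisets of naturals. -/
lemma mcap_sum_ge_iff {c t : ℕ} (hct : t ≤ c) (hc : 1 ≤ c) (m : Multiset ℕ) :
    t ≤ (mcap c m).sum ↔ t ≤ m.sum := by
  have hle : mcap c m ≤ m := by
    rw [Multiset.le_iff_count]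
    intro x
    rw [count_mcap]
    exact Nat.min_le_right _ _
  have hsle : (mcap c m).sum ≤ m.sum := by
    obtain ⟨u, hu⟩ := Multiset.le_iff_exists_add.1 hle
    have h2 : m.sum = (mcap c m + u).sum := congrArg _ hu
    rw [Multiset.sum_add] at h2
    omega
  constructor
  · intro h
    omega
  · intro h
    have htf : (mcap c m).toFinset = m.toFinset := by
      ext x
      simp only [Multiset.mem_toFinset, ← Multiset.count_pos, count_mcap]
      omega
    rcases em (∃ x ∈ m.toFinset, 1 ≤ x ∧ c < m.count x) with ⟨x, hx, hx1, hxc⟩ | hno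
    · have h1 : c * 1 ≤ (mcap c m).count x * x := by
        rw [count_mcap]
        have hmin : min c (m.count x) = c := by omega
        rw [hmin]
        exact Nat.mul_le_mul_left c hx1
      have h2 : (mcap c m).count x * x ≤ ∑ y ∈ (mcap c m).toFinset, (mcap c m).count y * y :=
        Finset.single_le_sum (f := fun y => (mcap c m).count y * y)
          (fun y _ => Nat.zero_le _) (by rw [htf]; exact hx)
      have h3 : (mcap c m).sum = ∑ y ∈ (mcap c m).toFinset, (mcap c m).count y * y := msum_eq
      omega
    · push_neg at hno
      have heq : (mcap c m).sum = m.sum := by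
        rw [msum_eq, msum_eq, htf]
        refine Finset.sum_congr rfl fun x hx => ?_
        rw [count_mcap]
        rcases Nat.eq_zero_or_pos x with rfl | hx1
        · simp
        · rw [min_eq_right (hno x hx hx1)]
      omega

/-- `min c` of a finite sum equals `min c` of the sum of the `min c`s. -/
lemma min_sum_min {ι : Type} (s : Finset ι) (c : ℕ) (u : ι → ℕ) :
    min c (∑ i ∈ s, u i) = min c (∑ i ∈ s, min c (u i)) := by
  rcases em (∃ i ∈ s, c ≤ u i) with ⟨i, hi, hci⟩ | hno
  · have h1 : c ≤ ∑ i ∈ s, u i :=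
      le_trans hci (Finset.single_le_sum (fun j _ => Nat.zero_le _) hi)
    have h2 : c ≤ ∑ i ∈ s, min c (u i) := by
      have h3 : min c (u i) ≤ ∑ j ∈ s, min c (u j) :=
        Finset.single_le_sum (f := fun j => min c (u j)) (fun j _ => Nat.zero_le _) hi
      have h4 : min c (u i) = c := min_eq_left hci
      omega
    rw [min_eq_left h1, min_eq_left h2]
  · push_neg at hno
    congr 1
    exact Finset.sum_congr rfl fun i hi => (min_eq_right (le_of_lt (hno i hi))).symm

end Aux

/-! ### From GML formulas to bounded GNNs -/

section ToGNN
attribute [local instance 10] Classical.propDecidable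

/-- Entries recording diamond subformulas. -/
abbrev Ent (AP : Type) := (T : Template) × (ℕ × (Fin T.n → GML AP))

/-- The diamond formula of an entry. -/
def mdia {AP : Type} (e : Ent AP) : GML AP := .dia e.1 e.2.1 e.2.2

/-- The list of diamond subformulas of a formula. -/
def diasSig {AP : Type} : GML AP → List (Ent AP)
  | .top => []
  | .prop _ => []
  | .neg ψ => diasSig ψ
  | .and ψ χ => diasSig ψ ++ diasSig χ
  | .dia T k ψs => ⟨T, k, ψs⟩ :: (List.ofFn fun i => diasSig (ψs i)).flatten

lemma mem_diasSig_closed {AP : Type} {χ : GML AP} {e : Ent AP} (he : e ∈ diasSig χ)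
    (i : Fin e.1.n) {e' : Ent AP} (he' : e' ∈ diasSig (e.2.2 i)) : e' ∈ diasSig χ := by
  induction χ with
  | top => simp [diasSig] at he
  | prop p => simp [diasSig] at he
  | neg ψ ih => exact ih he
  | and ψ₁ ψ₂ ih₁ ih₂ =>
    simp only [diasSig, List.mem_append] at he ⊢
    exact he.imp ih₁ ih₂
  | dia T k ψs ih =>
    simp only [diasSig, List.mem_cons] at he
    rcases he with rfl | he
    · simp only [diasSig, List.mem_cons, List.mem_flatten]
      right
      exact ⟨diasSig (ψs i), by rw [List.mem_ofFn]; exact ⟨i, rfl⟩, he'⟩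
    · simp only [List.mem_flatten] at he
      obtain ⟨L, hL, heL⟩ := he
      simp only [List.mem_ofFn, Set.mem_range] at hL
      obtain ⟨i₀, rfl⟩ := hL
      simp only [diasSig, List.mem_cons, List.mem_flatten]
      right
      exact ⟨diasSig (ψs i₀), by rw [List.mem_ofFn]; exact ⟨i₀, rfl⟩, ih i₀ heL⟩

lemma mem_diasSig_md {AP : Type} {χ : GML AP} {e : Ent AP} (he : e ∈ diasSig χ) :
    (mdia e).md ≤ χ.md := by
  induction χ with
  | top => simp [diasSig] at he
  | prop p => simp [diasSig] at he
  | neg ψ ih => exact ih he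
  | and ψ₁ ψ₂ ih₁ ih₂ =>
    simp only [diasSig, List.mem_append] at he
    rcases he with he | he
    · exact le_trans (ih₁ he) (le_max_left _ _)
    · exact le_trans (ih₂ he) (le_max_right _ _)
  | dia T k ψs ih =>
    simp only [diasSig, List.mem_cons] at he
    rcases he with rfl | he
    · exact le_refl _
    · simp only [List.mem_flatten] at he
      obtain ⟨L, hL, heL⟩ := he
      simp only [List.mem_ofFn, Set.mem_range] at hL
      obtain ⟨i₀, rfl⟩ := hL
      refine le_trans (ih i₀ heL) ?_
      show (ψs i₀).md ≤ (GML.dia T k ψs).md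
      have : (ψs i₀).md ≤ Finset.univ.sup fun i => (ψs i).md :=
        Finset.le_sup (f := fun i => (ψs i).md) (Finset.mem_univ i₀)
      simp only [GML.md]
      omega

lemma mem_diasSig_wf {AP : Type} (𝒯 : Finset Template) {χ : GML AP} (hχ : χ.Wf 𝒯)
    {e : Ent AP} (he : e ∈ diasSig χ) : e.1 ∈ 𝒯 := by
  induction χ with
  | top => simp [diasSig] at he
  | prop p => simp [diasSig] at he
  | neg ψ ih => exact ih hχ he
  | and ψ₁ ψ₂ ih₁ ih₂ =>
    simp only [diasSig, List.mem_append] at he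
    exact he.elim (ih₁ hχ.1) (ih₂ hχ.2)
  | dia T k ψs ih =>
    simp only [diasSig, List.mem_cons] at he
    rcases he with rfl | he
    · exact hχ.1
    · simp only [List.mem_flatten] at he
      obtain ⟨L, hL, heL⟩ := he
      simp only [List.mem_ofFn, Set.mem_range] at hL
      obtain ⟨i₀, rfl⟩ := hL
      exact ih i₀ (hχ.2.2 i₀) heL

/-- Evaluation of a formula given prop values and an oracle for diamonds. -/
def evalO {AP : Type} (pv : AP → Bool) (o : Ent AP → Bool) : GML AP → Bool
  | .top => true
  | .prop p => pv p
  | .neg ψ => ! evalO pv o ψ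
  | .and ψ χ => evalO pv o ψ && evalO pv o χ
  | .dia T k ψs => o ⟨T, k, ψs⟩

lemma boolToReal_eq_one {b : Bool} : boolToReal b = 1 ↔ b = true := by
  cases b <;> simp [boolToReal]

/-- Reading prop values off a feature vector. -/
noncomputable def pvOf {a K : ℕ} (x : Fin (a + K) → ℝ) : Fin a → Bool :=
  fun p => decide (x (Fin.castAdd K p) = 1)

/-- Reading diamond truth values off a feature vector. -/
noncomputable def oX {a : ℕ} (Dl : List (Ent (Fin a))) (x : Fin (a + Dl.length) → ℝ) :
    Ent (Fin a) → Bool :=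
  fun e => if h : e ∈ Dl then
    decide (x (Fin.natAdd a ⟨List.idxOf e Dl, List.idxOf_lt_length_iff.2 h⟩) = 1) else false

noncomputable def evalX {a : ℕ} (Dl : List (Ent (Fin a))) (x : Fin (a + Dl.length) → ℝ)
    (ψ : GML (Fin a)) : Bool := evalO (pvOf x) (oX Dl x) ψ

lemma evalX_correct {a : ℕ} (Dl : List (Ent (Fin a))) (G : LGraph (Fin a → Bool)) (v : ℕ)
    (x : Fin (a + Dl.length) → ℝ) (b : ℕ)
    (hx : ∀ p : Fin a, x (Fin.castAdd Dl.length p) = boolToReal (G.lab v p))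
    (hd : ∀ k : Fin Dl.length, (mdia (Dl.get k)).md ≤ b →
      x (Fin.natAdd a k) = boolToReal (decide (Sat G (mdia (Dl.get k)) v))) :
    ∀ ψ : GML (Fin a), ψ.md ≤ b → (∀ e ∈ diasSig ψ, e ∈ Dl) →
      (evalX Dl x ψ = true ↔ Sat G ψ v) := by
  intro ψ
  induction ψ with
  | top => intro _ _; simp [evalX, evalO, Sat]
  | prop p =>
    intro _ _
    simp only [evalX, evalO, pvOf, hx p, decide_eq_true_eq, boolToReal_eq_one]
    exact Iff.rfl
  | neg ψ ih =>
    intro hmd hdia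
    have := ih hmd (fun e he => hdia e he)
    simp only [evalX, evalO, Bool.not_eq_true', Sat] at this ⊢
    rw [← this]
    cases evalO (pvOf x) (oX Dl x) ψ <;> simp
  | and ψ₁ ψ₂ ih₁ ih₂ =>
    intro hmd hdia
    simp only [GML.md, max_le_iff] at hmd
    have h1 := ih₁ hmd.1 (fun e he => hdia e (by simp [diasSig, he]))
    have h2 := ih₂ hmd.2 (fun e he => hdia e (by simp [diasSig, he]))
    simp only [evalX, evalO, Bool.and_eq_true, Sat] at h1 h2 ⊢
    rw [h1, h2]
  | dia T k ψs ih =>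
    intro hmd hdia
    have he : (⟨T, k, ψs⟩ : Ent (Fin a)) ∈ Dl := hdia _ (by simp [diasSig])
    simp only [evalX, evalO, oX, dif_pos he]
    set kk : Fin Dl.length := ⟨List.idxOf (⟨T, k, ψs⟩ : Ent (Fin a)) Dl,
      List.idxOf_lt_length_iff.2 he⟩ with hkk
    have hget : Dl.get kk = ⟨T, k, ψs⟩ := List.idxOf_get _
    have := hd kk (by rw [hget]; exact hmd)
    rw [this, hget]
    simp only [decide_eq_true_eq, boolToReal_eq_one, decide_eq_true_eq]
    exact Iff.rfl

end ToGNN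

section ToGNN2
attribute [local instance 10] Classical.propDecidable

/-- Root-fixing label-free automorphism candidates of a template. -/
noncomputable def autSet (T : Template) : Finset (Equiv.Perm (Fin (T.n + 1))) :=
  Finset.univ.filter (fun σ => σ 0 = 0 ∧
    (∀ p : Fin (T.n + 1) × Fin (T.n + 1), p ∈ T.pos ↔ (σ p.1, σ p.2) ∈ T.pos) ∧
    (∀ p : Fin (T.n + 1) × Fin (T.n + 1), p ∈ T.neg ↔ (σ p.1, σ p.2) ∈ T.neg))

lemma mem_autSet {T : Template} {σ : Equiv.Perm (Fin (T.n + 1))} :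
    σ ∈ autSet T ↔ σ 0 = 0 ∧
      (∀ p : Fin (T.n + 1) × Fin (T.n + 1), p ∈ T.pos ↔ (σ p.1, σ p.2) ∈ T.pos) ∧
      (∀ p : Fin (T.n + 1) × Fin (T.n + 1), p ∈ T.neg ↔ (σ p.1, σ p.2) ∈ T.neg) := by
  simp [autSet]

lemma one_mem_autSet (T : Template) : Equiv.refl (Fin (T.n + 1)) ∈ autSet T := by
  simp [mem_autSet]

lemma autSet_card_pos (T : Template) : 0 < (autSet T).card :=
  Finset.card_pos.2 ⟨_, one_mem_autSet T⟩

lemma trans_mem_autSet {T : Template} {σ τ : Equiv.Perm (Fin (T.n + 1))}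
    (hσ : σ ∈ autSet T) (hτ : τ ∈ autSet T) : σ.trans τ ∈ autSet T := by
  rw [mem_autSet] at hσ hτ ⊢
  refine ⟨by simp [Equiv.trans_apply, hσ.1, hτ.1], fun p => ?_, fun p => ?_⟩
  · rw [hσ.2.1 p, hτ.2.1 (σ p.1, σ p.2)]
    exact Iff.rfl
  · rw [hσ.2.2 p, hτ.2.2 (σ p.1, σ p.2)]
    exact Iff.rfl

lemma symm_mem_autSet {T : Template} {σ : Equiv.Perm (Fin (T.n + 1))}
    (hσ : σ ∈ autSet T) : σ.symm ∈ autSet T := by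
  rw [mem_autSet] at hσ ⊢
  refine ⟨?_, fun p => ?_, fun p => ?_⟩
  · exact (Equiv.symm_apply_eq σ).2 hσ.1.symm
  · conv_lhs => rw [show p = (σ (σ.symm p.1), σ (σ.symm p.2)) by simp]
    rw [← hσ.2.1 (σ.symm p.1, σ.symm p.2)]
  · conv_lhs => rw [show p = (σ (σ.symm p.1), σ (σ.symm p.2)) by simp]
    rw [← hσ.2.2 (σ.symm p.1, σ.symm p.2)]

lemma autSet_apply_succ_ne_zero {T : Template} {σ : Equiv.Perm (Fin (T.n + 1))}
    (hσ : σ ∈ autSet T) (i : Fin T.n) : σ i.succ ≠ 0 := by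
  intro h
  have h0 : σ 0 = 0 := (mem_autSet.1 hσ).1
  have := σ.injective (h.trans h0.symm)
  exact Fin.succ_ne_zero i this

/-- Composing an embedding with an automorphism candidate yields an embedding. -/
lemma isEmb_comp {Λ : Type} {T : Template} {G : LGraph Λ} {w : ℕ}
    {f : Fin (T.n + 1) → ℕ} (hf : IsEmb T G w f) {σ : Equiv.Perm (Fin (T.n + 1))}
    (hσ : σ ∈ autSet T) : IsEmb T G w (f ∘ σ) := by
  rw [mem_autSet] at hσ
  obtain ⟨hinj, h0, hverts, hpos, hneg⟩ := hf
  refine ⟨hinj.comp σ.injective, by simp [Function.comp, hσ.1, h0], fun i => hverts _,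
    fun p hp => ?_, fun p hp => ?_⟩
  · exact hpos (σ p.1, σ p.2) ((hσ.2.1 p).1 hp)
  · exact hneg (σ p.1, σ p.2) ((hσ.2.2 p).1 hp)

lemma mem_embFinset {Λ : Type} {T : Template} {G : LGraph Λ} {w : ℕ}
    {f : Fin (T.n + 1) → ℕ} : f ∈ embFinset T G w ↔ IsEmb T G w f := by
  simp only [embFinset, Finset.mem_filter, Fintype.mem_piFinset, and_iff_right_iff_imp]
  exact fun hf u => hf.2.2.1 u

lemma embFinset_comp_mem {Λ : Type} {T : Template} {G : LGraph Λ} {w : ℕ}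
    {f : Fin (T.n + 1) → ℕ} (hf : f ∈ embFinset T G w) {σ : Equiv.Perm (Fin (T.n + 1))}
    (hσ : σ ∈ autSet T) : (f ∘ σ) ∈ embFinset T G w :=
  mem_embFinset.2 (isEmb_comp (mem_embFinset.1 hf) hσ)

/-- Reindexing by an automorphism candidate does not change the number of embeddings
with position-wise constrained non-root values. -/
lemma card_emb_reindex {Λ : Type} {T : Template} (G : LGraph Λ) (v : ℕ)
    {σ : Equiv.Perm (Fin (T.n + 1))} (hσ : σ ∈ autSet T) (Ps : Fin T.n → ℕ → Prop) :
    ((embFinset T G v).filter (fun f => ∀ i, Ps i (f (σ i.succ)))).card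
      = ((embFinset T G v).filter (fun f => ∀ i, Ps i (f i.succ))).card := by
  refine Finset.card_bij' (fun f _ => f ∘ σ) (fun g _ => g ∘ σ.symm) ?_ ?_ ?_ ?_
  · intro f hf
    rw [Finset.mem_filter] at hf ⊢
    exact ⟨embFinset_comp_mem hf.1 hσ, fun i => hf.2 i⟩
  · intro g hg
    rw [Finset.mem_filter] at hg ⊢
    refine ⟨embFinset_comp_mem hg.1 (symm_mem_autSet hσ), fun i => ?_⟩
    have := hg.2 i
    simpa [Function.comp] using this
  · intro f _
    funext u
    simp [Function.comp]
  · intro g _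
    funext u
    simp [Function.comp]

/-- Double counting: summing automorphism-counts over embeddings. -/
lemma sum_autCount {Λ : Type} {T : Template} (G : LGraph Λ) (v : ℕ)
    (Ps : Fin T.n → ℕ → Prop) :
    (∑ f ∈ embFinset T G v,
        ((autSet T).filter (fun σ => ∀ i, Ps i (f (σ i.succ)))).card)
      = (autSet T).card
        * ((embFinset T G v).filter (fun f => ∀ i, Ps i (f i.succ))).card := by
  have h1 : ∀ f ∈ embFinset T G v,
      ((autSet T).filter (fun σ => ∀ i, Ps i (f (σ i.succ)))).card
        = ∑ σ ∈ autSet T, if (∀ i, Ps i (f (σ i.succ))) then 1 else 0 := by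
    intro f _
    rw [Finset.card_filter]
  rw [Finset.sum_congr rfl h1, Finset.sum_comm]
  have h2 : ∀ σ ∈ autSet T,
      (∑ f ∈ embFinset T G v, if (∀ i, Ps i (f (σ i.succ))) then 1 else 0)
        = ((embFinset T G v).filter (fun f => ∀ i, Ps i (f i.succ))).card := by
    intro σ hσ
    rw [← Finset.card_filter, card_emb_reindex G v hσ]
  rw [Finset.sum_congr rfl h2, Finset.sum_const, smul_eq_mul]

end ToGNN2

section ToGNN3
attribute [local instance 10] Classical.propDecidable

/-- The number of automorphism candidates under which an embedding labelling satisfies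
the argument formulas of an entry. -/
noncomputable def aggTCount {a : ℕ} (Dl : List (Ent (Fin a))) (e : Ent (Fin a))
    (lab : Fin (e.1.n + 1) → Fin (a + Dl.length) → ℝ) : ℕ :=
  ((autSet e.1).filter
    (fun σ => ∀ i : Fin e.1.n, evalX Dl (lab (σ i.succ)) (e.2.2 i) = true)).card

lemma aggTCount_inv {a : ℕ} (Dl : List (Ent (Fin a))) (e : Ent (Fin a))
    (σ0 : Equiv.Perm (Fin (e.1.n + 1))) (h0 : σ0 0 = 0)
    (hpos : ∀ p : Fin (e.1.n + 1) × Fin (e.1.n + 1),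
      p ∈ e.1.pos ↔ (σ0 p.1, σ0 p.2) ∈ e.1.pos)
    (hneg : ∀ p : Fin (e.1.n + 1) × Fin (e.1.n + 1),
      p ∈ e.1.neg ↔ (σ0 p.1, σ0 p.2) ∈ e.1.neg)
    (lab₁ lab₂ : Fin (e.1.n + 1) → Fin (a + Dl.length) → ℝ)
    (hlab : ∀ u, u ≠ 0 → lab₁ u = lab₂ (σ0 u)) :
    aggTCount Dl e lab₁ = aggTCount Dl e lab₂ := by
  have hσ0 : σ0 ∈ autSet e.1 := mem_autSet.2 ⟨h0, hpos, hneg⟩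
  refine Finset.card_bij' (fun σ _ => σ.trans σ0) (fun σ _ => σ.trans σ0.symm) ?_ ?_ ?_ ?_
  · intro σ hσ
    rw [Finset.mem_filter] at hσ ⊢
    refine ⟨trans_mem_autSet hσ.1 hσ0, fun i => ?_⟩
    have hne := autSet_apply_succ_ne_zero hσ.1 i
    have h := hσ.2 i
    rw [hlab _ hne] at h
    simpa [Equiv.trans_apply] using h
  · intro σ hσ
    rw [Finset.mem_filter] at hσ ⊢
    have hmem := trans_mem_autSet hσ.1 (symm_mem_autSet hσ0)
    refine ⟨hmem, fun i => ?_⟩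
    have hne := autSet_apply_succ_ne_zero hmem i
    have h := hσ.2 i
    rw [hlab _ hne]
    simpa [Equiv.trans_apply] using h
  · intro σ _
    ext u
    simp
  · intro σ _
    ext u
    simp

/-- Boundedness constant for the constructed GNN. -/
noncomputable def cBig {a : ℕ} (Dl : List (Ent (Fin a))) : ℕ :=
  1 + ∑ j : Fin Dl.length, (autSet (Dl.get j).1).card * (Dl.get j).2.1

lemma one_le_cBig {a : ℕ} (Dl : List (Ent (Fin a))) : 1 ≤ cBig Dl := by
  simp [cBig]

lemma le_cBig {a : ℕ} (Dl : List (Ent (Fin a))) (j : Fin Dl.length) :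
    (autSet (Dl.get j).1).card * (Dl.get j).2.1 ≤ cBig Dl := by
  have := Finset.single_le_sum
    (f := fun j : Fin Dl.length => (autSet (Dl.get j).1).card * (Dl.get j).2.1)
    (fun _ _ => Nat.zero_le _) (Finset.mem_univ j)
  simp only [cBig]
  omega

/-- The outer aggregation functions of the constructed GNN. -/
noncomputable def aggFun {a : ℕ} (Dl : List (Ent (Fin a))) (j : Fin Dl.length)
    (m : Multiset (Fin (a + Dl.length) → ℝ)) : Fin (a + Dl.length) → ℝ :=
  fun _ => boolToReal (decide
    ((((autSet (Dl.get j).1).card * (Dl.get j).2.1 : ℕ) : ℝ) ≤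
      ((mcap (cBig Dl) m).map (fun x => x ⟨0, by have := j.isLt; omega⟩)).sum))

lemma aggFun_bounded {a : ℕ} (Dl : List (Ent (Fin a))) (j : Fin Dl.length)
    (m : Multiset (Fin (a + Dl.length) → ℝ)) :
    aggFun Dl j m = aggFun Dl j (mcap (cBig Dl) m) := by
  unfold aggFun
  rw [mcap_idem]

/-- The GNN constructed from a GML formula. -/
noncomputable def gnnOf {a : ℕ} (𝒯 : Finset Template) (φ : GML (Fin a)) (hWf : φ.Wf 𝒯) :
    TGNN 𝒯 (a + (diasSig φ).length) (diasSig φ).length φ.md where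
  temp := fun _ j => ((diasSig φ).get j).1
  temp_mem := fun _ j => mem_diasSig_wf 𝒯 hWf (List.get_mem _ _)
  aggT := fun _ j lab => fun _ => (aggTCount (diasSig φ) ((diasSig φ).get j) lab : ℝ)
  aggT_inv := by
    intro l j σ lab₁ lab₂ h0 hpos hneg hlab
    funext y
    exact congrArg _ (aggTCount_inv (diasSig φ) ((diasSig φ).get j) σ h0 hpos hneg
      lab₁ lab₂ hlab)
  agg := fun _ j => aggFun (diasSig φ) j
  comb := fun _ x ys => fun i =>
    if h : i.val < a then x i else ys ⟨i.val - a, by have := i.isLt; omega⟩ i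
  cls := fun x => evalX (diasSig φ) x φ

lemma gnnOf_bounded {a : ℕ} (𝒯 : Finset Template) (φ : GML (Fin a)) (hWf : φ.Wf 𝒯) :
    (gnnOf 𝒯 φ hWf).IsCBounded (cBig (diasSig φ)) :=
  fun _ j m => aggFun_bounded (diasSig φ) j m

lemma embFinset_initG {a : ℕ} (d : ℕ) (T : Template) (G : LGraph (Fin a → Bool)) (v : ℕ) :
    embFinset T (initG d G) v = embFinset T G v := by
  ext f
  constructor <;> exact fun h => h

end ToGNN3

section Invariant
attribute [local instance 10] Classical.propDecidable

variable {a : ℕ}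

/-- The invariant satisfied by the features of the constructed GNN. -/
def InvAt (𝒯 : Finset Template) (φ : GML (Fin a)) (hWf : φ.Wf 𝒯)
    (G : LGraph (Fin a → Bool)) (l : ℕ) : Prop :=
  ∀ w ∈ G.verts,
    (∀ p : Fin a, (gnnOf 𝒯 φ hWf).feat (initG (a + (diasSig φ).length) G) l w
        (Fin.castAdd (diasSig φ).length p) = boolToReal (G.lab w p)) ∧
    (∀ k : Fin (diasSig φ).length, (mdia ((diasSig φ).get k)).md ≤ l →
      (gnnOf 𝒯 φ hWf).feat (initG (a + (diasSig φ).length) G) l w (Fin.natAdd a k)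
        = boolToReal (decide (Sat G (mdia ((diasSig φ).get k)) w)))

lemma evalX_feat {𝒯 : Finset Template} {φ : GML (Fin a)} {hWf : φ.Wf 𝒯}
    {G : LGraph (Fin a → Bool)} {l : ℕ} (hinv : InvAt 𝒯 φ hWf G l) {w : ℕ}
    (hw : w ∈ G.verts) (ψ : GML (Fin a)) (hmd : ψ.md ≤ l)
    (hdias : ∀ e ∈ diasSig ψ, e ∈ diasSig φ) :
    (evalX (diasSig φ) ((gnnOf 𝒯 φ hWf).feat (initG (a + (diasSig φ).length) G) l w) ψ
      = true ↔ Sat G ψ w) :=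
  evalX_correct _ G w _ l (hinv w hw).1 (hinv w hw).2 ψ hmd hdias

lemma agg_step (𝒯 : Finset Template) (φ : GML (Fin a)) (hWf : φ.Wf 𝒯)
    (G : LGraph (Fin a → Bool)) (l : ℕ) (hinv : InvAt 𝒯 φ hWf G l) (v : ℕ)
    (k : Fin (diasSig φ).length) (hk : (mdia ((diasSig φ).get k)).md ≤ l + 1) :
    aggFun (diasSig φ) k
      ((embFinset (((diasSig φ).get k).1) (initG (a + (diasSig φ).length) G) v).val.map
        (fun f => fun _ => (aggTCount (diasSig φ) ((diasSig φ).get k)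
          (fun u => (gnnOf 𝒯 φ hWf).feat (initG (a + (diasSig φ).length) G) l (f u)) : ℝ)))
      = fun _ => boolToReal (decide (Sat G (mdia ((diasSig φ).get k)) v)) := by
  have heφ : (diasSig φ).get k ∈ diasSig φ := List.get_mem _ _
  have hargmd : ∀ i : Fin ((diasSig φ).get k).1.n, (((diasSig φ).get k).2.2 i).md ≤ l := by
    intro i
    have h1 : (((diasSig φ).get k).2.2 i).md
        ≤ Finset.univ.sup (fun i => (((diasSig φ).get k).2.2 i).md) :=
      Finset.le_sup (f := fun i => (((diasSig φ).get k).2.2 i).md) (Finset.mem_univ i)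
    have h2 : (mdia ((diasSig φ).get k)).md
        = 1 + Finset.univ.sup (fun i => (((diasSig φ).get k).2.2 i).md) := rfl
    omega
  have hcount : ∀ f ∈ embFinset ((diasSig φ).get k).1 G v,
      aggTCount (diasSig φ) ((diasSig φ).get k)
        (fun u => (gnnOf 𝒯 φ hWf).feat (initG (a + (diasSig φ).length) G) l (f u))
      = ((autSet ((diasSig φ).get k).1).filter
          (fun σ => ∀ i, Sat G (((diasSig φ).get k).2.2 i) (f (σ i.succ)))).card := by
    intro f hf
    unfold aggTCount
    congr 1
    refine Finset.filter_congr fun σ hσ => ?_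
    refine forall_congr' fun i => ?_
    have hmem := mem_embFinset.1 hf
    have hwv : f (σ i.succ) ∈ G.verts := hmem.2.2.1 _
    exact evalX_feat hinv hwv (((diasSig φ).get k).2.2 i) (hargmd i)
      (fun e' he' => mem_diasSig_closed heφ i he')
  have hcvec : Function.Injective
      (fun n : ℕ => (fun _ : Fin (a + (diasSig φ).length) => (n : ℝ))) := by
    intro n m h
    have := congrFun h ⟨0, by have := k.isLt; omega⟩
    exact Nat.cast_injective this
  have hM : (embFinset ((diasSig φ).get k).1 (initG (a + (diasSig φ).length) G) v).val.map
      (fun f => (fun _ : Fin (a + (diasSig φ).length) => (aggTCount (diasSig φ)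
        ((diasSig φ).get k)
        (fun u => (gnnOf 𝒯 φ hWf).feat (initG (a + (diasSig φ).length) G) l (f u)) : ℝ)))
      = ((embFinset ((diasSig φ).get k).1 G v).val.map
          (fun f => ((autSet ((diasSig φ).get k).1).filter
            (fun σ => ∀ i, Sat G (((diasSig φ).get k).2.2 i) (f (σ i.succ)))).card)).map
          (fun n : ℕ => (fun _ : Fin (a + (diasSig φ).length) => (n : ℝ))) := by
    rw [embFinset_initG, Multiset.map_map]
    refine Multiset.map_congr rfl fun f hf => ?_
    have hf' : f ∈ embFinset ((diasSig φ).get k).1 G v := Finset.mem_def.2 hf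
    simp only [Function.comp]
    rw [hcount f hf']
  funext y
  unfold aggFun
  rw [hM, mcap_map_inj _ _ _ hcvec, Multiset.map_map]
  have hcomp : ((fun x : Fin (a + (diasSig φ).length) → ℝ =>
        x ⟨0, by have := k.isLt; omega⟩)
      ∘ (fun n : ℕ => (fun _ : Fin (a + (diasSig φ).length) => (n : ℝ))))
      = (fun n : ℕ => (n : ℝ)) := rfl
  rw [hcomp]
  have hsumcast : ((mcap (cBig (diasSig φ))
        ((embFinset ((diasSig φ).get k).1 G v).val.map
          (fun f => ((autSet ((diasSig φ).get k).1).filter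
            (fun σ => ∀ i, Sat G (((diasSig φ).get k).2.2 i) (f (σ i.succ)))).card))).map
      (fun n : ℕ => (n : ℝ))).sum
      = (((mcap (cBig (diasSig φ))
        ((embFinset ((diasSig φ).get k).1 G v).val.map
          (fun f => ((autSet ((diasSig φ).get k).1).filter
            (fun σ => ∀ i, Sat G (((diasSig φ).get k).2.2 i) (f (σ i.succ)))).card))).sum
          : ℕ) : ℝ) := by
    rw [Nat.cast_multiset_sum]
  rw [hsumcast]
  refine congrArg boolToReal (decide_eq_decide.2 ?_)
  rw [Nat.cast_le]
  rw [mcap_sum_ge_iff (le_cBig (diasSig φ) k) (one_le_cBig (diasSig φ))]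
  have hMsum : ((embFinset ((diasSig φ).get k).1 G v).val.map
      (fun f => ((autSet ((diasSig φ).get k).1).filter
        (fun σ => ∀ i, Sat G (((diasSig φ).get k).2.2 i) (f (σ i.succ)))).card)).sum
      = (autSet ((diasSig φ).get k).1).card
        * ((embFinset ((diasSig φ).get k).1 G v).filter
            (fun f => ∀ i, Sat G (((diasSig φ).get k).2.2 i) (f i.succ))).card := by
    exact sum_autCount G v (fun i u => Sat G (((diasSig φ).get k).2.2 i) u)
  rw [hMsum]
  have hA : 0 < (autSet ((diasSig φ).get k).1).card := autSet_card_pos _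
  constructor
  · intro h
    exact Nat.le_of_mul_le_mul_left h hA
  · intro h
    exact Nat.mul_le_mul_left _ h

lemma gnnOf_invariant (𝒯 : Finset Template) (φ : GML (Fin a)) (hWf : φ.Wf 𝒯)
    (G : LGraph (Fin a → Bool)) : ∀ l, l ≤ φ.md → InvAt 𝒯 φ hWf G l := by
  intro l
  induction l with
  | zero =>
    intro _ w hw
    constructor
    · intro p
      show (initG (a + (diasSig φ).length) G).lab w (Fin.castAdd (diasSig φ).length p)
        = boolToReal (G.lab w p)
      simp only [initG]
      rw [dif_pos (show ((Fin.castAdd (diasSig φ).length p).val < a) from p.isLt)]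
      rfl
    · intro k hk
      exfalso
      have : (mdia ((diasSig φ).get k)).md
          = 1 + Finset.univ.sup (fun i => ((((diasSig φ).get k).2.2) i).md) := rfl
      omega
  | succ l ih =>
    intro hl1 w hw
    have hlL : l < φ.md := Nat.lt_of_succ_le hl1
    have hinv := ih (Nat.le_of_succ_le hl1)
    set N := gnnOf 𝒯 φ hWf with hN
    set G' := initG (a + (diasSig φ).length) G with hG'
    have hfeat : N.feat G' (l+1) w = N.comb ⟨l, hlL⟩ (N.feat G' l w)
        (fun j => N.agg ⟨l, hlL⟩ j
          ((embFinset (N.temp ⟨l, hlL⟩ j) G' w).val.map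
            (fun f => N.aggT ⟨l, hlL⟩ j (fun u => N.feat G' l (f u))))) := by
      rw [TGNN.feat, dif_pos hlL]
    constructor
    · intro p
      rw [hfeat]
      show (if h : (Fin.castAdd (diasSig φ).length p).val < a
          then N.feat G' l w (Fin.castAdd (diasSig φ).length p) else _) = _
      rw [dif_pos (show ((Fin.castAdd (diasSig φ).length p).val < a) from p.isLt)]
      exact (hinv w hw).1 p
    · intro k hk
      rw [hfeat]
      have hnlt : ¬ ((Fin.natAdd a k).val < a) := by
        simp only [Fin.natAdd]
        omega
      show (if h : (Fin.natAdd a k).val < a then _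
          else (fun j => N.agg ⟨l, hlL⟩ j
            ((embFinset (N.temp ⟨l, hlL⟩ j) G' w).val.map
              (fun f => N.aggT ⟨l, hlL⟩ j (fun u => N.feat G' l (f u)))))
            ⟨(Fin.natAdd a k).val - a, by have := (Fin.natAdd a k).isLt; omega⟩
            (Fin.natAdd a k)) = _
      rw [dif_neg hnlt]
      have hfin : (⟨(Fin.natAdd a k).val - a, by have := (Fin.natAdd a k).isLt; omega⟩
          : Fin (diasSig φ).length) = k := by
        apply Fin.ext
        simp only [Fin.natAdd]
        omega
      rw [hfin]
      exact congrFun (agg_step 𝒯 φ hWf G l hinv w k hk) (Fin.natAdd a k)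

/-- Every well-formed GML formula is computed by a bounded `𝒯`-GNN. -/
theorem gml_computed_by_gnn (𝒯 : Finset Template) (φ : GML (Fin a)) (hWf : φ.Wf 𝒯) :
    ∃ (d nAr L : ℕ) (N : TGNN 𝒯 d nAr L) (c : ℕ), 1 ≤ c ∧ N.IsCBounded c ∧
      ∀ (G : LGraph (Fin a → Bool)) (v : ℕ), v ∈ G.verts →
        (N.cls (N.feat (initG d G) L v) = true ↔ Sat G φ v) := by
  refine ⟨_, _, _, gnnOf 𝒯 φ hWf, cBig (diasSig φ), one_le_cBig _, gnnOf_bounded 𝒯 φ hWf, ?_⟩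
  intro G v hv
  have hinv := gnnOf_invariant 𝒯 φ hWf G φ.md (le_refl _)
  exact evalX_feat hinv hv φ (le_refl _) (fun e he => he)

end Invariant

/-! ### From bounded GNNs to GML formulas -/

section ToGML
attribute [local instance 10] Classical.propDecidable

variable {a : ℕ}

/-- The formula pinning down the label of a node. -/
noncomputable def labFormula (b : Fin a → Bool) : GML (Fin a) :=
  bigConj ((Finset.univ : Finset (Fin a)).toList.map
    (fun p => if b p then GML.prop p else GML.neg (GML.prop p)))

lemma Sat_labFormula (G : LGraph (Fin a → Bool)) (v : ℕ) (b : Fin a → Bool) :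
    Sat G (labFormula b) v ↔ G.lab v = b := by
  rw [labFormula, Sat_bigConj]
  constructor
  · intro h
    funext p
    have hp := h _ (List.mem_map.2 ⟨p, by simp, rfl⟩)
    by_cases hb : b p
    · rw [if_pos hb] at hp
      simp only [Sat] at hp
      rw [hp, hb]
    · rw [if_neg hb] at hp
      simp only [Sat] at hp
      rw [Bool.not_eq_true] at hp
      rw [hp, Bool.eq_false_iff.2 hb]
  · intro h χ hχ
    obtain ⟨p, _, rfl⟩ := List.mem_map.1 hχ
    by_cases hb : b p
    · rw [if_pos hb]
      show G.lab v p = true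
      rw [h, hb]
    · rw [if_neg hb]
      show ¬ (G.lab v p = true)
      rw [h]
      simp [hb]

lemma Wf_labFormula (𝒯 : Finset Template) (b : Fin a → Bool) : (labFormula b).Wf 𝒯 := by
  refine Wf_bigConj _ _ fun χ hχ => ?_
  obtain ⟨p, _, rfl⟩ := List.mem_map.1 hχ
  by_cases hb : b p
  · rw [if_pos hb]; trivial
  · rw [if_neg hb]; trivial

lemma Sat_dia_iff (G : LGraph (Fin a → Bool)) (T : Template) (j : ℕ)
    (φs : Fin T.n → GML (Fin a)) (v : ℕ) :
    Sat G (.dia T j φs) v ↔ j ≤ Scard G T v φs := Iff.rfl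

/-- Formula pinning the capped count `min c (Scard G T v φs)` to equal `m`. -/
def cntF {AP : Type} (c : ℕ) (T : Template) (φs : Fin T.n → GML AP) (m : ℕ) : GML AP :=
  if m = 0 then .neg (.dia T 1 φs)
  else if m = c then .dia T c φs
  else .and (.dia T m φs) (.neg (.dia T (m + 1) φs))

lemma Wf_cntF (𝒯 : Finset Template) (c : ℕ) (hc : 1 ≤ c) (T : Template) (hT : T ∈ 𝒯)
    {AP : Type} (φs : Fin T.n → GML AP) (hφs : ∀ i, (φs i).Wf 𝒯) (m : ℕ) :
    (cntF c T φs m).Wf 𝒯 := by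
  unfold cntF
  by_cases h0 : m = 0
  · rw [if_pos h0]
    exact ⟨hT, le_refl 1, hφs⟩
  · rw [if_neg h0]
    by_cases hcm : m = c
    · rw [if_pos hcm]
      exact ⟨hT, hc, hφs⟩
    · rw [if_neg hcm]
      exact ⟨⟨hT, by omega, hφs⟩, hT, by omega, hφs⟩

lemma Sat_cntF (c : ℕ) (hc : 1 ≤ c) (T : Template) (G : LGraph (Fin a → Bool)) (v : ℕ)
    (φs : Fin T.n → GML (Fin a)) (m : ℕ) (hm : m ≤ c) :
    Sat G (cntF c T φs m) v ↔ min c (Scard G T v φs) = m := by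
  unfold cntF
  by_cases h0 : m = 0
  · rw [if_pos h0]
    show ¬ Sat G (.dia T 1 φs) v ↔ _
    rw [Sat_dia_iff]
    omega
  · rw [if_neg h0]
    by_cases hcm : m = c
    · rw [if_pos hcm]
      rw [Sat_dia_iff]
      omega
    · rw [if_neg hcm]
      show Sat G (.dia T m φs) v ∧ ¬ Sat G (.dia T (m+1) φs) v ↔ _
      rw [Sat_dia_iff, Sat_dia_iff]
      omega

/-- The refined cell formula. -/
noncomputable def cellF {R : Type} [Fintype R] {nAr : ℕ} (c : ℕ) (temps : Fin nAr → Template)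
    (ψ : R → GML (Fin a)) (r : R) (D : ∀ j : Fin nAr, (Fin (temps j).n → R) → Fin (c + 1)) :
    GML (Fin a) :=
  .and (ψ r) (bigConj ((List.finRange nAr).map (fun j =>
    bigConj ((Finset.univ : Finset (Fin (temps j).n → R)).toList.map
      (fun τ => cntF c (temps j) (fun i => ψ (τ i)) (D j τ))))))

lemma Sat_cellF {R : Type} [Fintype R] {nAr : ℕ} (c : ℕ) (hc : 1 ≤ c)
    (temps : Fin nAr → Template) (ψ : R → GML (Fin a)) (r : R)
    (D : ∀ j : Fin nAr, (Fin (temps j).n → R) → Fin (c + 1))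
    (G : LGraph (Fin a → Bool)) (v : ℕ) :
    Sat G (cellF c temps ψ r D) v ↔ Sat G (ψ r) v ∧
      ∀ (j : Fin nAr) (τ : Fin (temps j).n → R),
        min c (Scard G (temps j) v (fun i => ψ (τ i))) = (D j τ : ℕ) := by
  show Sat G (ψ r) v ∧ Sat G (bigConj _) v ↔ _
  rw [Sat_bigConj]
  apply and_congr Iff.rfl
  constructor
  · intro h j τ
    have hj := h _ (List.mem_map.2 ⟨j, List.mem_finRange j, rfl⟩)
    rw [Sat_bigConj] at hj
    have hτ := hj _ (List.mem_map.2 ⟨τ, by simp, rfl⟩)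
    rw [Sat_cntF c hc _ G v _ _ (by omega)] at hτ
    exact hτ
  · intro h χ hχ
    obtain ⟨j, _, rfl⟩ := List.mem_map.1 hχ
    rw [Sat_bigConj]
    intro χ' hχ'
    obtain ⟨τ, _, rfl⟩ := List.mem_map.1 hχ'
    rw [Sat_cntF c hc _ G v _ _ (by omega)]
    exact h j τ

lemma Wf_cellF {R : Type} [Fintype R] {nAr : ℕ} (𝒯 : Finset Template) (c : ℕ) (hc : 1 ≤ c)
    (temps : Fin nAr → Template) (htemps : ∀ j, temps j ∈ 𝒯) (ψ : R → GML (Fin a))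
    (hψ : ∀ r, (ψ r).Wf 𝒯) (r : R)
    (D : ∀ j : Fin nAr, (Fin (temps j).n → R) → Fin (c + 1)) :
    (cellF c temps ψ r D).Wf 𝒯 := by
  refine ⟨hψ r, Wf_bigConj _ _ fun χ hχ => ?_⟩
  obtain ⟨j, _, rfl⟩ := List.mem_map.1 hχ
  refine Wf_bigConj _ _ fun χ' hχ' => ?_
  obtain ⟨τ, _, rfl⟩ := List.mem_map.1 hχ'
  exact Wf_cntF 𝒯 c hc _ (htemps j) _ (fun i => hψ (τ i)) _

end ToGML

section ToGML2
attribute [local instance 10] Classical.propDecidable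

variable {a : ℕ}

/-- Partitioning the multiset of aggregated template values by the cells of the
non-root embedding nodes. -/
lemma count_partition {R β : Type} [Fintype R] [DecidableEq β] (T : Template) (G : LGraph (Fin a → Bool))
    (v : ℕ) (ψ : R → GML (Fin a))
    (huniq : ∀ w ∈ G.verts, ∃! r, Sat G (ψ r) w)
    (gval : (Fin (T.n + 1) → ℕ) → β) (aggVal : (Fin T.n → R) → β)
    (hg : ∀ f ∈ embFinset T G v, ∀ τ : Fin T.n → R,
      (∀ i, Sat G (ψ (τ i)) (f i.succ)) → gval f = aggVal τ)
    (x : β) :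
    ((embFinset T G v).val.map gval).count x
      = ∑ τ : Fin T.n → R, if x = aggVal τ then Scard G T v (fun i => ψ (τ i)) else 0 := by
  have h1 : ((embFinset T G v).val.map gval).count x
      = ((embFinset T G v).filter (fun f => x = gval f)).card := by
    rw [Multiset.count_map]
    rfl
  rw [h1]
  have hcover : (embFinset T G v).filter (fun f => x = gval f)
      = Finset.univ.biUnion (fun τ : Fin T.n → R =>
          (embFinset T G v).filter
            (fun f => (∀ i, Sat G (ψ (τ i)) (f i.succ)) ∧ x = gval f)) := by
    ext f
    simp only [Finset.mem_filter, Finset.mem_biUnion, Finset.mem_univ, true_and]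
    constructor
    · rintro ⟨hf, hx⟩
      have hverts : ∀ i : Fin T.n, f i.succ ∈ G.verts :=
        fun i => (mem_embFinset.1 hf).2.2.1 _
      exact ⟨fun i => Classical.choose (huniq _ (hverts i)), hf,
        fun i => (Classical.choose_spec (huniq _ (hverts i))).1, hx⟩
    · rintro ⟨τ, hf, _, hx⟩
      exact ⟨hf, hx⟩
  have hdisj : ∀ τ ∈ (Finset.univ : Finset (Fin T.n → R)), ∀ τ' ∈ Finset.univ, τ ≠ τ' →
      Disjoint ((embFinset T G v).filter
          (fun f => (∀ i, Sat G (ψ (τ i)) (f i.succ)) ∧ x = gval f))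
        ((embFinset T G v).filter
          (fun f => (∀ i, Sat G (ψ (τ' i)) (f i.succ)) ∧ x = gval f)) := by
    intro τ _ τ' _ hne
    rw [Finset.disjoint_left]
    rintro f hf hf'
    simp only [Finset.mem_filter] at hf hf'
    apply hne
    funext i
    have hv' : f i.succ ∈ G.verts := (mem_embFinset.1 hf.1).2.2.1 _
    obtain ⟨r0, hr0, hru⟩ := huniq _ hv'
    rw [hru _ (hf.2.1 i), hru _ (hf'.2.1 i)]
  rw [hcover, Finset.card_biUnion hdisj]
  refine Finset.sum_congr rfl fun τ _ => ?_
  by_cases hx : x = aggVal τ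
  · rw [if_pos hx]
    have heq : (embFinset T G v).filter
        (fun f => (∀ i, Sat G (ψ (τ i)) (f i.succ)) ∧ x = gval f)
        = (embFinset T G v).filter (fun f => ∀ i, Sat G (ψ (τ i)) (f i.succ)) := by
      refine Finset.filter_congr fun f hf => ?_
      simp only [and_iff_left_iff_imp]
      intro hfit
      exact hx.trans (hg f hf τ hfit).symm
    rw [heq]
    rfl
  · rw [if_neg hx, Finset.card_eq_zero, Finset.filter_eq_empty_iff]
    rintro f hf ⟨hfit, hxg⟩
    exact hx (hxg.trans (hg f hf τ hfit))

end ToGML2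

section ToGML3
attribute [local instance 10] Classical.propDecidable

variable {a : ℕ}

lemma partition_exists {d nAr L : ℕ} (𝒯 : Finset Template) (N : TGNN 𝒯 d nAr L)
    (c : ℕ) (hc : 1 ≤ c) (hb : N.IsCBounded c) (l : ℕ) :
    ∃ (R : Type) (_ : Fintype R) (ψ : R → GML (Fin a)) (w : R → (Fin d → ℝ)),
      (∀ r, (ψ r).Wf 𝒯) ∧
      (∀ (G : LGraph (Fin a → Bool)) (v : ℕ), v ∈ G.verts → ∃! r, Sat G (ψ r) v) ∧
      (∀ (G : LGraph (Fin a → Bool)) (v : ℕ), v ∈ G.verts → ∀ r, Sat G (ψ r) v →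
        N.feat (initG d G) l v = w r) := by
  induction l with
  | zero =>
    refine ⟨Fin a → Bool, inferInstance, labFormula,
      fun b => fun i => if h : (i : ℕ) < a then boolToReal (b ⟨i, h⟩) else 0,
      fun b => Wf_labFormula 𝒯 b, ?_, ?_⟩
    · intro G v hv
      exact ⟨G.lab v, (Sat_labFormula G v _).2 rfl,
        fun r hr => ((Sat_labFormula G v r).1 hr).symm⟩
    · intro G v hv r hr
      have hlab := (Sat_labFormula G v r).1 hr
      show (initG d G).lab v = _
      rw [show (initG d G).lab v
        = fun i : Fin d => if h : (i : ℕ) < a then boolToReal (G.lab v ⟨i, h⟩) else 0 from rfl,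
        hlab]
  | succ l ih =>
    obtain ⟨R, hR, ψ, w, hWfψ, huniq, hfeat⟩ := ih
    haveI := hR
    by_cases hlL : l < L
    · refine ⟨R × (∀ j : Fin nAr, (Fin (N.temp ⟨l, hlL⟩ j).n → R) → Fin (c + 1)),
        inferInstance,
        fun rD => cellF c (fun j => N.temp ⟨l, hlL⟩ j) ψ rD.1 rD.2,
        fun rD => N.comb ⟨l, hlL⟩ (w rD.1) (fun j => N.agg ⟨l, hlL⟩ j
          ((Finset.univ : Finset (Fin (N.temp ⟨l, hlL⟩ j).n → R)).val.bind
            (fun τ => Multiset.replicate ((rD.2 j τ) : ℕ)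
              (N.aggT ⟨l, hlL⟩ j
                (fun u => if h : u = 0 then w rD.1 else w (τ (u.pred h))))))),
        ?_, ?_, ?_⟩
      · intro rD
        exact Wf_cellF 𝒯 c hc _ (fun j => N.temp_mem _ j) ψ hWfψ rD.1 rD.2
      · intro G v hv
        obtain ⟨r0, hr0, hr0u⟩ := huniq G v hv
        refine ⟨⟨r0, fun j τ =>
          ⟨min c (Scard G (N.temp ⟨l, hlL⟩ j) v (fun i => ψ (τ i))), by omega⟩⟩, ?_, ?_⟩
        · beta_reduce
          rw [Sat_cellF c hc]
          exact ⟨hr0, fun j τ => rfl⟩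
        · rintro ⟨r', D'⟩ hSat
          beta_reduce at hSat
          rw [Sat_cellF c hc] at hSat
          obtain ⟨hr', hD'⟩ := hSat
          have hre : r' = r0 := hr0u _ hr'
          subst hre
          rw [Prod.mk.injEq]
          refine ⟨rfl, ?_⟩
          funext j τ
          apply Fin.ext
          exact (hD' j τ).symm
      · intro G v hv rD hSat
        obtain ⟨r, D⟩ := rD
        beta_reduce at hSat
        rw [Sat_cellF c hc] at hSat
        obtain ⟨hr, hD⟩ := hSat
        have hfeatv : N.feat (initG d G) l v = w r := hfeat G v hv r hr
        rw [TGNN.feat, dif_pos hlL, hfeatv]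
        refine congrArg (N.comb ⟨l, hlL⟩ (w r)) ?_
        funext j
        have hagg : ∀ (m₁ m₂ : Multiset (Fin d → ℝ)), mcap c m₁ = mcap c m₂ →
            N.agg ⟨l, hlL⟩ j m₁ = N.agg ⟨l, hlL⟩ j m₂ := by
          intro m₁ m₂ hm
          rw [hb ⟨l, hlL⟩ j m₁, hb ⟨l, hlL⟩ j m₂, hm]
        apply hagg
        have hg : ∀ f ∈ embFinset (N.temp ⟨l, hlL⟩ j) G v,
            ∀ τ : Fin (N.temp ⟨l, hlL⟩ j).n → R,
            (∀ i, Sat G (ψ (τ i)) (f i.succ)) →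
            N.aggT ⟨l, hlL⟩ j (fun u => N.feat (initG d G) l (f u))
              = N.aggT ⟨l, hlL⟩ j (fun u => if h : u = 0 then w r else w (τ (u.pred h))) := by
          intro f hf τ hfit
          refine congrArg (N.aggT ⟨l, hlL⟩ j) ?_
          funext u
          by_cases h0 : u = 0
          · subst h0
            rw [dif_pos rfl, (mem_embFinset.1 hf).2.1]
            exact hfeatv
          · rw [dif_neg h0]
            have hsucc : (u.pred h0).succ = u := Fin.succ_pred u h0
            have hfit' := hfit (u.pred h0)
            rw [hsucc] at hfit'
            exact hfeat G (f u) ((mem_embFinset.1 hf).2.2.1 u) _ hfit'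
        ext x
        rw [count_mcap, count_mcap, embFinset_initG]
        have hMc : ((embFinset (N.temp ⟨l, hlL⟩ j) G v).val.map
            (fun f => N.aggT ⟨l, hlL⟩ j (fun u => N.feat (initG d G) l (f u)))).count x
            = ∑ τ : Fin (N.temp ⟨l, hlL⟩ j).n → R,
              if x = N.aggT ⟨l, hlL⟩ j (fun u => if h : u = 0 then w r else w (τ (u.pred h)))
              then Scard G (N.temp ⟨l, hlL⟩ j) v (fun i => ψ (τ i)) else 0 :=
          count_partition (N.temp ⟨l, hlL⟩ j) G v ψ (huniq G)
            (fun f => N.aggT ⟨l, hlL⟩ j (fun u => N.feat (initG d G) l (f u)))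
            (fun τ => N.aggT ⟨l, hlL⟩ j (fun u => if h : u = 0 then w r else w (τ (u.pred h))))
            hg x
        have hrc : ((Finset.univ : Finset (Fin (N.temp ⟨l, hlL⟩ j).n → R)).val.bind
            (fun τ => Multiset.replicate ((D j τ) : ℕ)
              (N.aggT ⟨l, hlL⟩ j
                (fun u => if h : u = 0 then w r else w (τ (u.pred h)))))).count x
            = ∑ τ : Fin (N.temp ⟨l, hlL⟩ j).n → R,
              if N.aggT ⟨l, hlL⟩ j (fun u => if h : u = 0 then w r else w (τ (u.pred h))) = x
              then ((D j τ) : ℕ) else 0 := by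
          rw [Multiset.count_bind]
          have h0 : ((Finset.univ : Finset (Fin (N.temp ⟨l, hlL⟩ j).n → R)).val.map
              (fun τ => (Multiset.replicate ((D j τ) : ℕ)
                (N.aggT ⟨l, hlL⟩ j
                  (fun u => if h : u = 0 then w r else w (τ (u.pred h))))).count x)).sum
              = ∑ τ : Fin (N.temp ⟨l, hlL⟩ j).n → R, (Multiset.replicate ((D j τ) : ℕ)
                (N.aggT ⟨l, hlL⟩ j
                  (fun u => if h : u = 0 then w r else w (τ (u.pred h))))).count x := rfl
          rw [h0]
          exact Finset.sum_congr rfl fun τ _ => by rw [Multiset.count_replicate]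
        rw [hMc, hrc]
        have hterm : ∀ τ : Fin (N.temp ⟨l, hlL⟩ j).n → R,
            (if N.aggT ⟨l, hlL⟩ j (fun u => if h : u = 0 then w r else w (τ (u.pred h))) = x
              then ((D j τ) : ℕ) else 0)
            = min c (if x = N.aggT ⟨l, hlL⟩ j
                (fun u => if h : u = 0 then w r else w (τ (u.pred h)))
              then Scard G (N.temp ⟨l, hlL⟩ j) v (fun i => ψ (τ i)) else 0) := by
          intro τ
          by_cases hx : x = N.aggT ⟨l, hlL⟩ j
              (fun u => if h : u = 0 then w r else w (τ (u.pred h)))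
          · rw [if_pos hx.symm, if_pos hx, ← hD j τ]
          · rw [if_neg (fun h => hx h.symm), if_neg hx]
            simp
        rw [Finset.sum_congr rfl (fun τ _ => hterm τ), ← min_sum_min]
    · refine ⟨R, hR, ψ, fun _ => fun _ => 0, hWfψ, huniq, ?_⟩
      intro G v hv r hr
      rw [TGNN.feat, dif_neg hlL]

/-- Every bounded `𝒯`-GNN classifier is definable by a GML formula. -/
theorem gnn_to_gml {d nAr L : ℕ} (𝒯 : Finset Template) (N : TGNN 𝒯 d nAr L)
    (c : ℕ) (hc : 1 ≤ c) (hb : N.IsCBounded c) :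
    ∃ φ : GML (Fin a), φ.Wf 𝒯 ∧ ∀ (G : LGraph (Fin a → Bool)) (v : ℕ), v ∈ G.verts →
      (N.cls (N.feat (initG d G) L v) = true ↔ Sat G φ v) := by
  obtain ⟨R, hR, ψ, w, hWfψ, huniq, hfeat⟩ := partition_exists 𝒯 N c hc hb L
  haveI := hR
  refine ⟨bigDisj (((Finset.univ : Finset R).filter
    (fun r => N.cls (w r) = true)).toList.map ψ), ?_, ?_⟩
  · refine Wf_bigDisj _ _ fun χ hχ => ?_
    obtain ⟨r, _, rfl⟩ := List.mem_map.1 hχ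
    exact hWfψ r
  · intro G v hv
    obtain ⟨r0, hr0, hr0u⟩ := huniq G v hv
    rw [hfeat G v hv r0 hr0, Sat_bigDisj]
    constructor
    · intro h
      refine ⟨ψ r0, List.mem_map.2 ⟨r0, ?_, rfl⟩, hr0⟩
      rw [Finset.mem_toList, Finset.mem_filter]
      exact ⟨Finset.mem_univ r0, h⟩
    · rintro ⟨χ, hχ, hSat⟩
      obtain ⟨r, hrmem, rfl⟩ := List.mem_map.1 hχ
      have hre : r = r0 := hr0u _ hSat
      subst hre
      rw [Finset.mem_toList, Finset.mem_filter] at hrmem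
      exact hrmem.2

end ToGML3
/-- A Boolean node classifier on finite pointed labelled graphs over a
fixed finite proposition set is computed by some bounded `𝒯`-GNN iff it is definable by
some `GML(𝒯)` formula. -/
theorem bounded_gnn_iff_gml {a : ℕ} (𝒯 : Finset Template)
    (F : LGraph (Fin a → Bool) → ℕ → Bool) :
    (∃ (d nAr L : ℕ) (N : TGNN 𝒯 d nAr L) (c : ℕ), 1 ≤ c ∧ N.IsCBounded c ∧
        ∀ (G : LGraph (Fin a → Bool)) (v : ℕ), v ∈ G.verts →
          F G v = N.cls (N.feat (initG d G) L v))
    ↔ (∃ φ : GML (Fin a), φ.Wf 𝒯 ∧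
        ∀ (G : LGraph (Fin a → Bool)) (v : ℕ), v ∈ G.verts →
          (F G v = true ↔ Sat G φ v)) := by
  constructor
  · rintro ⟨d, nAr, L, N, c, hc, hb, hF⟩
    obtain ⟨φ, hWf, h⟩ := gnn_to_gml 𝒯 N c hc hb
    refine ⟨φ, hWf, fun G v hv => ?_⟩
    rw [hF G v hv]
    exact h G v hv
  · rintro ⟨φ, hWf, hF⟩
    obtain ⟨d, nAr, L, N, c, hc, hb, h⟩ := gml_computed_by_gnn 𝒯 φ hWf
    refine ⟨d, nAr, L, N, c, hc, hb, fun G v hv => ?_⟩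
    have h1 := hF G v hv
    have h2 := h G v hv
    cases hFv : F G v <;> cases hNv : N.cls (N.feat (initG d G) L v) <;> simp_all
end

section
/- Let G₁ be the directed 3-cycle on vertices {0,1,2} with edges (0,1),(1,2),(2,0), and G₂ the directed 6-cycle on vertices {0,…,5} with edges (i, i+1 mod 6), all nodes of both graphs carrying the same constant label. Let T₁ be the edge template ({r,a}, E⁺={(r,a)}, E⁻=∅, root r) and T△ the triangle template ({r,a,b}, E⁺={(r,a),(a,b),(b,r)}, E⁻=∅, root r). Then for every l ∈ ℕ and all nodes v ∈ G₁, w ∈ G₂, the pointed graphs (G₁,v) and (G₂,w) are graded l-{T₁}-bisimilar (hence indistinguishable by standard 1-WL), but (G₁,v) and (G₂,w) are not graded 1-{T△}-bisimilar. -/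
set_option maxHeartbeats 1000000

attribute [local instance 10] Classical.propDecidable

/-- The "full" relation between vertex sets of `G3` and `G6`. -/
def Zf : ℕ → ℕ → Prop := fun a b => a ∈ G3.verts ∧ b ∈ G6.verts

/-- A candidate edge embedding. -/
def eT1 (v a : ℕ) : Fin (T1.n + 1) → ℕ := fun i => if i = 0 then v else a

/-- A candidate triangle embedding. -/
def eTri (v a b : ℕ) : Fin (Ttri.n + 1) → ℕ :=
  fun i => if i = 0 then v else if i = 1 then a else b

lemma isEmb_T1 {Λ : Type} (G : LGraph Λ) (v a : ℕ) (hne : v ≠ a) (he : G.edge v a) :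
    IsEmb T1 G v (eT1 v a) := by
  refine ⟨?_, rfl, ?_, ?_, ?_⟩
  · intro i j h
    have h0 : eT1 v a 0 = v := if_pos rfl
    have h1 : eT1 v a 1 = a := if_neg (by decide)
    fin_cases i <;> fin_cases j
    · rfl
    · exact absurd (h0.symm.trans (h.trans h1)) hne
    · exact absurd (h0.symm.trans (h.symm.trans h1)) hne
    · rfl
  · intro i
    fin_cases i
    · exact (G.edge_mem _ _ he).1
    · exact (G.edge_mem _ _ he).2
  · intro p hp
    have : p = ((0 : Fin 2), (1 : Fin 2)) := by
      exact Finset.mem_singleton.mp hp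
    subst this
    exact he
  · intro p hp
    exact absurd hp (Finset.notMem_empty _)

lemma emb_T1_unique {Λ : Type} {G : LGraph Λ}
    (huniq : ∀ v a b, G.edge v a → G.edge v b → a = b)
    {v : ℕ} {f g : Fin (T1.n + 1) → ℕ}
    (hf : IsEmb T1 G v f) (hg : IsEmb T1 G v g) : f = g := by
  obtain ⟨-, hf0, -, hfp, -⟩ := hf
  obtain ⟨-, hg0, -, hgp, -⟩ := hg
  have hef : G.edge (f 0) (f 1) := hfp ((0 : Fin 2), (1 : Fin 2)) (by decide)
  have heg : G.edge (g 0) (g 1) := hgp ((0 : Fin 2), (1 : Fin 2)) (by decide)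
  rw [hf0] at hef
  rw [hg0] at heg
  funext i
  by_cases hi : i = 0
  · subst hi; rw [hf0, hg0]
  · have h1 : i = 1 := by
      have hlt : (i : ℕ) < 2 := i.isLt
      have hv0 : (i : ℕ) ≠ 0 := fun h => hi (Fin.ext h)
      exact Fin.ext (show (i : ℕ) = 1 by omega)
    subst h1
    exact huniq v _ _ hef heg

lemma g3_uniq : ∀ v a b, G3.edge v a → G3.edge v b → a = b := by
  intro v a b ha hb
  rcases ha with ⟨rfl, rfl⟩ | ⟨rfl, rfl⟩ | ⟨rfl, rfl⟩ <;>
    rcases hb with ⟨h, rfl⟩ | ⟨h, rfl⟩ | ⟨h, rfl⟩ <;> omega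

lemma g6_uniq : ∀ v a b, G6.edge v a → G6.edge v b → a = b := by
  intro v a b ha hb
  rw [ha.2, hb.2]

lemma forth36 (v v' : ℕ) (hv : v ∈ G3.verts) (hv' : v' ∈ G6.verts) (k : ℕ) :
    Forth Zf T1 G3 G6 v v' k := by
  intro F hinj hemb
  match k with
  | 0 =>
    exact ⟨fun i => i.elim0, fun i => i.elim0, fun i => i.elim0, fun i => i.elim0⟩
  | 1 =>
    have hv'6 : v' < 6 := by simpa [G6] using hv'
    have hne : v' ≠ (v' + 1) % 6 := by omega
    have he : G6.edge v' ((v' + 1) % 6) := ⟨hv'6, rfl⟩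
    refine ⟨fun _ => eT1 v' ((v' + 1) % 6), fun i j _ => Subsingleton.elim i j,
      fun _ => isEmb_T1 G6 v' _ hne he, ?_⟩
    intro i u
    refine ⟨(hemb i).2.2.1 u, ?_⟩
    simp only [eT1, G6, Finset.mem_range]
    split <;> omega
  | k + 2 =>
    have h01 : F 0 = F 1 := emb_T1_unique g3_uniq (hemb 0) (hemb 1)
    have := hinj h01
    simp [Fin.ext_iff] at this

lemma g3_next (v : ℕ) (hv : v ∈ G3.verts) :
    ∃ a, v ≠ a ∧ a ∈ G3.verts ∧ G3.edge v a := by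
  have : v = 0 ∨ v = 1 ∨ v = 2 := by simpa [G3] using hv
  rcases this with rfl | rfl | rfl
  · exact ⟨1, by omega, by simp [G3], Or.inl ⟨rfl, rfl⟩⟩
  · exact ⟨2, by omega, by simp [G3], Or.inr (Or.inl ⟨rfl, rfl⟩)⟩
  · exact ⟨0, by omega, by simp [G3], Or.inr (Or.inr ⟨rfl, rfl⟩)⟩

lemma forth63 (v v' : ℕ) (hv : v ∈ G3.verts) (hv' : v' ∈ G6.verts) (k : ℕ) :
    Forth (fun a b => Zf b a) T1 G6 G3 v' v k := by
  intro F hinj hemb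
  match k with
  | 0 =>
    exact ⟨fun i => i.elim0, fun i => i.elim0, fun i => i.elim0, fun i => i.elim0⟩
  | 1 =>
    obtain ⟨a, hne, ha, he⟩ := g3_next v hv
    refine ⟨fun _ => eT1 v a, fun i j _ => Subsingleton.elim i j,
      fun _ => isEmb_T1 G3 v a hne he, ?_⟩
    intro i u
    refine ⟨?_, (hemb i).2.2.1 u⟩
    simp only [eT1]
    split
    · exact hv
    · exact ha
  | k + 2 =>
    have h01 : F 0 = F 1 := emb_T1_unique g6_uniq (hemb 0) (hemb 1)
    have := hinj h01
    simp [Fin.ext_iff] at this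

lemma bisim_all (l : ℕ) : IsBisimP {T1} (fun k => 1 ≤ k) G3 G6 l Zf := by
  induction l with
  | zero => intro v v' _; rfl
  | succ l ih =>
    refine ⟨Zf, ih, fun v v' hz => ⟨hz, fun T hT k _ => ?_⟩⟩
    have hT' : T = T1 := by simpa using hT
    subst hT'
    exact ⟨forth36 v v' hz.1 hz.2 k, forth63 v v' hz.1 hz.2 k⟩

lemma triEmbG3 (v : ℕ) (hv : v ∈ G3.verts) :
    ∃ f, IsEmb Ttri G3 v f := by
  have : v = 0 ∨ v = 1 ∨ v = 2 := by simpa [G3] using hv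
  rcases this with rfl | rfl | rfl
  · refine ⟨eTri 0 1 2, ?_, rfl, ?_, ?_, ?_⟩
    · decide
    · decide
    · intro p hp
      fin_cases hp <;>
        first
          | exact Or.inl ⟨rfl, rfl⟩
          | exact Or.inr (Or.inl ⟨rfl, rfl⟩)
          | exact Or.inr (Or.inr ⟨rfl, rfl⟩)
    · intro p hp; exact absurd hp (Finset.notMem_empty _)
  · refine ⟨eTri 1 2 0, ?_, rfl, ?_, ?_, ?_⟩
    · decide
    · decide
    · intro p hp
      fin_cases hp <;>
        first
          | exact Or.inl ⟨rfl, rfl⟩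
          | exact Or.inr (Or.inl ⟨rfl, rfl⟩)
          | exact Or.inr (Or.inr ⟨rfl, rfl⟩)
    · intro p hp; exact absurd hp (Finset.notMem_empty _)
  · refine ⟨eTri 2 0 1, ?_, rfl, ?_, ?_, ?_⟩
    · decide
    · decide
    · intro p hp
      fin_cases hp <;>
        first
          | exact Or.inl ⟨rfl, rfl⟩
          | exact Or.inr (Or.inl ⟨rfl, rfl⟩)
          | exact Or.inr (Or.inr ⟨rfl, rfl⟩)
    · intro p hp; exact absurd hp (Finset.notMem_empty _)

lemma noTriG6 (w : ℕ) (f : Fin (Ttri.n + 1) → ℕ) (h : IsEmb Ttri G6 w f) : False := by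
  obtain ⟨-, h0, -, hp, -⟩ := h
  have h1 := hp ((0 : Fin 3), (1 : Fin 3)) (by decide)
  have h2 := hp ((1 : Fin 3), (2 : Fin 3)) (by decide)
  have h3 := hp ((2 : Fin 3), (0 : Fin 3)) (by decide)
  have h1' : G6.edge w (f 1) := by rw [← h0]; exact h1
  have h2' : G6.edge (f 1) (f 2) := h2
  have h3' : G6.edge (f 2) w := by rw [← h0]; exact h3
  obtain ⟨hw6, e1⟩ := h1'
  obtain ⟨-, e2⟩ := h2'
  obtain ⟨-, e3⟩ := h3'
  omega

/-- Any node of the directed 3-cycle and any node of the directed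
6-cycle (with constant labels) are graded `l`-`{T₁}`-bisimilar for every `l` (hence
indistinguishable by standard 1-WL), but they are not graded `1`-`{T△}`-bisimilar. -/
theorem cycles_separated_by_triangle_template (l : ℕ) (v w : ℕ)
    (hv : v ∈ G3.verts) (hw : w ∈ G6.verts) :
    GBisimilar {T1} l G3 v G6 w ∧ ¬ GBisimilar {Ttri} 1 G3 v G6 w := by
  constructor
  · exact ⟨Zf, bisim_all l, hv, hw⟩
  · rintro ⟨Z, ⟨Z', -, hstep⟩, hvw⟩
    obtain ⟨-, hforth⟩ := hstep v w hvw
    obtain ⟨hf, -⟩ := hforth Ttri (by simp) 1 le_rfl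
    obtain ⟨g, hg⟩ := triEmbG3 v hv
    obtain ⟨F', -, hemb', -⟩ :=
      hf (fun _ => g) (fun i j _ => Subsingleton.elim i j) (fun _ => hg)
    exact noTriG6 w (F' 0) (hemb' 0)
end
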